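/- Deterministic peeling bound with a logarithmic factor. Let d ≥ 1, T ≥ 3, λ > 0, L > 0, let X_1, …, X_T ∈ ℝ^d satisfy ‖X_t‖ ≤ L, and set V_0 = λ·I_d, V_t = V_{t−1} + X_t X_tᵀ. Let Δ_1, …, Δ_T ∈ [0,1] and let β_0 ≤ β_1 ≤ … ≤ β_{T−1} be real numbers with β_0 ≥ 1; write β := β_{T−1}. Then for every Γ ∈ (0,1): Σ_{t=1}^T Δ_t·1{ ‖X_t‖²_{V_{t−1}^{−1}} ≥ Δ_t²/(β_{t−1}·log T) } ≤ T·Γ + (48·d·β·log T/Γ)·log(1 + 8·L²·β·log T/(λ·Γ²)). -/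

import Mathlib

open Matrix Finset
open scoped Classical

/-- Euclidean norm of a vector in `ℝ^d`. -/
noncomputable def enorm2 {d : ℕ} (v : Fin d → ℝ) : ℝ := Real.sqrt (v ⬝ᵥ v)


variable {d : ℕ}

-- real PSD: quad form nonneg
lemma quad_nonneg {M : Matrix (Fin d) (Fin d) ℝ} (hM : M.PosSemidef) (x : Fin d → ℝ) :
    0 ≤ x ⬝ᵥ M.mulVec x := by
  simpa [star_trivial] using hM.dotProduct_mulVec_nonneg x

lemma outer_psd (x : Fin d → ℝ) : (Matrix.vecMulVec x x).PosSemidef := by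
  have h : Matrix.vecMulVec x x = (Matrix.replicateRow Unit x)ᴴ * Matrix.replicateRow Unit x := by
    rw [Matrix.vecMulVec_eq Unit]
    simp [Matrix.conjTranspose_replicateRow, star_trivial]
  rw [h]
  exact Matrix.posSemidef_conjTranspose_mul_self _

lemma psd_sum {ι : Type*} (s : Finset ι) (f : ι → Matrix (Fin d) (Fin d) ℝ)
    (hf : ∀ i ∈ s, (f i).PosSemidef) : (∑ i ∈ s, f i).PosSemidef := by
  classical
  induction s using Finset.induction_on with
  | empty => simpa using Matrix.PosSemidef.zero
  | @insert a s' hx ih =>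
    rw [Finset.sum_insert hx]
    exact (hf a (Finset.mem_insert_self a s')).add (ih fun i hi => hf i (Finset.mem_insert_of_mem hi))

lemma smul_one_posdef {c : ℝ} (hc : 0 < c) : ((c • 1 : Matrix (Fin d) (Fin d) ℝ)).PosDef := by
  refine Matrix.PosDef.of_dotProduct_mulVec_pos ?_ ?_
  · simp [Matrix.IsHermitian, Matrix.conjTranspose_smul]
  · intro x hx
    have : x ⬝ᵥ (c • (1:Matrix (Fin d) (Fin d) ℝ)).mulVec x = c * (x ⬝ᵥ x) := by
      simp [Matrix.smul_mulVec, Matrix.one_mulVec, dotProduct_smul, smul_eq_mul]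
    rw [star_trivial, this]
    exact mul_pos hc (by
      have := dotProduct_star_self_pos_iff (v := x) |>.mpr hx
      simpa [star_trivial] using this)

lemma quad_nonneg' {M : Matrix (Fin d) (Fin d) ℝ} (hM : M.PosSemidef) (x : Fin d → ℝ) :
    0 ≤ x ⬝ᵥ M.mulVec x := by simpa [star_trivial] using hM.dotProduct_mulVec_nonneg x

lemma quad_mono {A B : Matrix (Fin d) (Fin d) ℝ} (h : (B - A).PosSemidef) (x : Fin d → ℝ) :
    x ⬝ᵥ A.mulVec x ≤ x ⬝ᵥ B.mulVec x := by
  have := quad_nonneg' h x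
  rw [Matrix.sub_mulVec, dotProduct_sub] at this
  linarith

-- symmetric matrices move across dot products
lemma dot_symm {A : Matrix (Fin d) (Fin d) ℝ} (hA : A.IsHermitian) (u v : Fin d → ℝ) :
    u ⬝ᵥ A.mulVec v = (A.mulVec u) ⬝ᵥ v := by
  have hAt : Aᵀ = A := by
    have := hA.eq
    rwa [Matrix.conjTranspose_eq_transpose_of_trivial] at this
  rw [Matrix.dotProduct_mulVec, ← Matrix.vecMul_transpose, hAt]

lemma inv_quad_anti {A B : Matrix (Fin d) (Fin d) ℝ} (hA : A.PosDef)
    (hBA : (B - A).PosSemidef) (x : Fin d → ℝ) :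
    x ⬝ᵥ B⁻¹.mulVec x ≤ x ⬝ᵥ A⁻¹.mulVec x := by
  have hB : B.PosDef := by
    have := hA.add_posSemidef hBA
    simpa using this
  have hBunit : IsUnit B.det := hB.det_pos.ne'.isUnit
  have hAunit : IsUnit A.det := hA.det_pos.ne'.isUnit
  set y := B⁻¹.mulVec x with hy
  have hBy : B.mulVec y = x := by
    rw [hy, Matrix.mulVec_mulVec, Matrix.mul_nonsing_inv _ hBunit, Matrix.one_mulVec]
  set z := A⁻¹.mulVec x with hz
  have hAz : A.mulVec z = x := by
    rw [hz, Matrix.mulVec_mulVec, Matrix.mul_nonsing_inv _ hAunit, Matrix.one_mulVec]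
  -- x ⬝ᵥ B⁻¹ x = x ⬝ᵥ y,  x ⬝ᵥ A⁻¹ x = x ⬝ᵥ z
  have key : 0 ≤ (y - z) ⬝ᵥ A.mulVec (y - z) := quad_nonneg' hA.posSemidef _
  have expand : (y - z) ⬝ᵥ A.mulVec (y - z)
      = y ⬝ᵥ A.mulVec y - y ⬝ᵥ x - x ⬝ᵥ y + x ⬝ᵥ z := by
    rw [Matrix.mulVec_sub, dotProduct_sub, sub_dotProduct, sub_dotProduct, hAz]
    have h1 : z ⬝ᵥ A.mulVec y = x ⬝ᵥ y := by
      rw [dot_symm hA.isHermitian, hAz]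
    have h2 : z ⬝ᵥ x = x ⬝ᵥ z := dotProduct_comm _ _
    rw [h1, h2]
    ring
  have hq : y ⬝ᵥ A.mulVec y ≤ y ⬝ᵥ B.mulVec y := quad_mono hBA y
  have hyBy : y ⬝ᵥ B.mulVec y = y ⬝ᵥ x := by rw [hBy]
  have hxy : y ⬝ᵥ x = x ⬝ᵥ y := dotProduct_comm _ _
  -- combine
  have : x ⬝ᵥ y ≤ x ⬝ᵥ z := by nlinarith [key, expand, hq, hyBy, hxy]
  simpa [hy, hz] using this

lemma det_rank_one_update {A : Matrix (Fin d) (Fin d) ℝ} (hA : A.PosDef) (x : Fin d → ℝ) :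
    (A + Matrix.vecMulVec x x).det = A.det * (1 + x ⬝ᵥ A⁻¹.mulVec x) := by
  have hAunit : IsUnit A.det := hA.det_pos.ne'.isUnit
  rw [Matrix.vecMulVec_eq Unit, Matrix.det_add_replicateCol_mul_replicateRow hAunit]
  congr 1
  have hsym : ∀ i j, A⁻¹ i j = A⁻¹ j i := by
    intro i j
    have h := hA.isHermitian.inv.eq
    have := congrFun (congrFun h j) i
    simpa [Matrix.conjTranspose_apply, star_trivial] using this
  rw [Matrix.det_unique]
  simp [Matrix.add_apply, Matrix.one_apply, Matrix.mul_apply, Matrix.replicateRow_apply, Matrix.replicateCol_apply,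
    Matrix.mulVec, dotProduct, Finset.mul_sum, mul_comm, mul_assoc, mul_left_comm]
  exact Finset.sum_congr rfl fun i _ => Finset.sum_congr rfl fun j _ => by rw [hsym]

lemma trace_eq_sum_eig {A : Matrix (Fin d) (Fin d) ℝ} (hA : A.IsHermitian) :
    A.trace = ∑ i, hA.eigenvalues i := by
  nth_rewrite 1 [hA.spectral_theorem]
  rw [Unitary.conjStarAlgAut_apply, Matrix.trace_mul_cycle]
  have hU : (star (hA.eigenvectorUnitary : Matrix (Fin d) (Fin d) ℝ)) *
      (hA.eigenvectorUnitary : Matrix (Fin d) (Fin d) ℝ) = 1 :=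
    (Matrix.mem_unitaryGroup_iff').mp hA.eigenvectorUnitary.2
  rw [hU, Matrix.one_mul, Matrix.trace_diagonal]
  simp

lemma det_le_trace_pow {A : Matrix (Fin d) (Fin d) ℝ} (hd : 0 < d) (hA : A.PosSemidef) :
    A.det ≤ (A.trace / d) ^ d := by
  have herm := hA.isHermitian
  have hev : ∀ i, 0 ≤ herm.eigenvalues i := hA.eigenvalues_nonneg
  have hdet : A.det = ∏ i, herm.eigenvalues i := by
    have := herm.det_eq_prod_eigenvalues
    simpa using this
  have htr : A.trace = ∑ i, herm.eigenvalues i := trace_eq_sum_eig herm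
  rw [hdet, htr]
  -- AM-GM
  have hamgm : ∏ i : Fin d, (herm.eigenvalues i) ^ ((d:ℝ)⁻¹) ≤
      ∑ i : Fin d, (d:ℝ)⁻¹ * herm.eigenvalues i :=
    Real.geom_mean_le_arith_mean_weighted Finset.univ (fun _ => (d:ℝ)⁻¹) herm.eigenvalues
      (fun _ _ => by positivity)
      (by simp [Finset.sum_const]; field_simp)
      (fun i _ => hev i)
  have hprod : ∏ i : Fin d, herm.eigenvalues i
      = (∏ i : Fin d, (herm.eigenvalues i) ^ ((d:ℝ)⁻¹)) ^ (d:ℕ) := by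
    rw [← Finset.prod_pow]
    apply Finset.prod_congr rfl
    intro i _
    rw [← Real.rpow_natCast ((herm.eigenvalues i) ^ ((d:ℝ)⁻¹)) d, ← Real.rpow_mul (hev i)]
    rw [inv_mul_cancel₀ (by exact_mod_cast hd.ne'), Real.rpow_one]
  rw [hprod]
  apply pow_le_pow_left₀ (Finset.prod_nonneg fun i _ => Real.rpow_nonneg (hev i) _)
  calc ∏ i : Fin d, (herm.eigenvalues i) ^ ((d:ℝ)⁻¹)
      ≤ ∑ i : Fin d, (d:ℝ)⁻¹ * herm.eigenvalues i := hamgm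
    _ = (∑ i : Fin d, herm.eigenvalues i) / d := by
        rw [← Finset.mul_sum]; ring

set_option maxHeartbeats 2000000 in
lemma count_lemma (d T : ℕ) (hd : 1 ≤ d) (lam L b : ℝ)
    (hlam : 0 < lam) (hL : 0 < L) (hb : 0 < b) (hb1 : b ≤ 1)
    (X : ℕ → Fin d → ℝ) (hX : ∀ t ∈ Finset.Icc 1 T, X t ⬝ᵥ X t ≤ L ^ 2)
    (V : ℕ → Matrix (Fin d) (Fin d) ℝ)
    (hV0 : V 0 = lam • (1 : Matrix (Fin d) (Fin d) ℝ))
    (hV : ∀ t, V (t + 1) = V t + Matrix.vecMulVec (X (t + 1)) (X (t + 1)))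
    (S : Finset ℕ) (hS : S ⊆ Finset.Icc 1 T)
    (hw : ∀ t ∈ S, b ≤ X t ⬝ᵥ (V (t - 1))⁻¹.mulVec (X t)) :
    (S.card : ℝ) ≤ 6 * d / b * Real.log (1 + 2 * L ^ 2 / (b * lam)) := by
  have hdR : (0:ℝ) < d := by exact_mod_cast hd
  -- trivial case
  rcases S.eq_empty_or_nonempty with rfl | hne
  · simp only [Finset.card_empty, Nat.cast_zero]
    apply mul_nonneg (by positivity)
    apply Real.log_nonneg
    have : (0:ℝ) ≤ 2 * L ^ 2 / (b * lam) := by positivity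
    linarith
  -- the W construction
  set W : Finset ℕ → Matrix (Fin d) (Fin d) ℝ :=
    fun s => lam • 1 + ∑ u ∈ s, Matrix.vecMulVec (X u) (X u) with hWdef
  have hWpd : ∀ s : Finset ℕ, (W s).PosDef := fun s =>
    (smul_one_posdef hlam).add_posSemidef (psd_sum s _ fun i _ => outer_psd (X i))
  have hWmono : ∀ s s' : Finset ℕ, s ⊆ s' → (W s' - W s).PosSemidef := by
    intro s s' hss
    have : W s' - W s = ∑ u ∈ s' \ s, Matrix.vecMulVec (X u) (X u) := by
      rw [hWdef]
      simp only
      rw [← Finset.sum_sdiff hss]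
      abel
    rw [this]
    exact psd_sum _ _ fun i _ => outer_psd (X i)
  have hVW : ∀ t : ℕ, V t = W (Finset.Icc 1 t) := by
    intro t
    induction t with
    | zero => simp [hV0, hWdef]
    | succ n ih =>
      rw [hV n, ih, hWdef]
      simp only
      rw [show Finset.Icc 1 (n+1) = insert (n+1) (Finset.Icc 1 n) by
        ext x
        simp only [Finset.mem_Icc, Finset.mem_insert]
        omega]
      rw [Finset.sum_insert (by simp)]
      abel
  -- determinant lower bound
  have hdetlow : ∀ s : Finset ℕ, s ⊆ S → lam ^ d * (1 + b) ^ s.card ≤ (W s).det := by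
    intro s
    induction s using Finset.induction_on_max with
    | empty =>
      intro _
      have : (W ∅).det = lam ^ d := by
        simp [hWdef, Matrix.det_smul]
      rw [this]; simp
    | insert a s hmax ih =>
      intro hsub
      have hsubS : s ⊆ S := fun u hu => hsub (Finset.mem_insert_of_mem hu)
      have haS : a ∈ S := hsub (Finset.mem_insert_self a s)
      have ha1 : 1 ≤ a := (Finset.mem_Icc.mp (hS haS)).1
      have hanotins : a ∉ s := fun h => lt_irrefl a (hmax a h)
      have hsubIcc : s ⊆ Finset.Icc 1 (a - 1) := by
        intro u hu
        have h1 := (Finset.mem_Icc.mp (hS (hsubS hu))).1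
        have h2 := hmax u hu
        rw [Finset.mem_Icc]; omega
      have hpsd : (V (a - 1) - W s).PosSemidef := by
        rw [hVW (a - 1)]; exact hWmono _ _ hsubIcc
      have hq : b ≤ X a ⬝ᵥ (W s)⁻¹.mulVec (X a) :=
        le_trans (hw a haS) (inv_quad_anti (hWpd s) hpsd (X a))
      have hWins : W (insert a s) = W s + Matrix.vecMulVec (X a) (X a) := by
        rw [hWdef]; simp only; rw [Finset.sum_insert hanotins]; abel
      rw [hWins, det_rank_one_update (hWpd s) (X a), Finset.card_insert_of_notMem hanotins]
      have hdetpos : (0:ℝ) < (W s).det := (hWpd s).det_pos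
      calc lam ^ d * (1 + b) ^ (s.card + 1)
          = (lam ^ d * (1 + b) ^ s.card) * (1 + b) := by ring
        _ ≤ (W s).det * (1 + X a ⬝ᵥ (W s)⁻¹.mulVec (X a)) :=
            mul_le_mul (ih hsubS) (by linarith) (by linarith) (le_of_lt hdetpos)
  -- trace upper bound
  have htrace : (W S).trace ≤ lam * d + S.card * L ^ 2 := by
    rw [hWdef]
    simp only [Matrix.trace_add, Matrix.trace_smul, Matrix.trace_one, Matrix.trace_sum,
      smul_eq_mul, Fintype.card_fin]
    have hterm : ∀ u ∈ S, (Matrix.vecMulVec (X u) (X u)).trace ≤ L ^ 2 := by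
      intro u hu
      have he : (Matrix.vecMulVec (X u) (X u)).trace = X u ⬝ᵥ X u := by
        simp [Matrix.trace, Matrix.diag, Matrix.vecMulVec_apply, dotProduct]
      rw [he]; exact hX u (hS hu)
    have := Finset.sum_le_sum hterm
    rw [Finset.sum_const, nsmul_eq_mul] at this
    linarith
  -- key log inequality
  have htrnn : (0:ℝ) ≤ (W S).trace := by
    rw [trace_eq_sum_eig (hWpd S).posSemidef.isHermitian]
    exact Finset.sum_nonneg fun i _ => (hWpd S).posSemidef.eigenvalues_nonneg i
  have hmain : (S.card : ℝ) * Real.log (1 + b) ≤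
      (d : ℝ) * Real.log (1 + S.card * L ^ 2 / (d * lam)) := by
    have h1 : lam ^ d * (1 + b) ^ S.card ≤ ((lam * d + S.card * L ^ 2) / d) ^ d := by
      refine le_trans (hdetlow S (subset_refl S)) ?_
      refine le_trans (det_le_trace_pow (by omega) (hWpd S).posSemidef) ?_
      apply pow_le_pow_left₀ (by positivity)
      gcongr
    have h2 : ((lam * d + S.card * L ^ 2) / d) ^ d
        = lam ^ d * (1 + S.card * L ^ 2 / (d * lam)) ^ d := by
      rw [← mul_pow]; congr 1; field_simp
    rw [h2] at h1
    have hlp : (0:ℝ) < lam ^ d := by positivity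
    have h3 : (1 + b) ^ S.card ≤ (1 + S.card * L ^ 2 / (d * lam)) ^ d :=
      le_of_mul_le_mul_left (by linarith) hlp
    have h4 := Real.log_le_log (by positivity) h3
    rwa [Real.log_pow, Real.log_pow] at h4
  -- b is at most L^2/lam
  obtain ⟨t0, ht0⟩ := hne
  have hbL : b * lam ≤ L ^ 2 := by
    have h1 := hw t0 ht0
    have hpsd0 : (V (t0 - 1) - lam • 1).PosSemidef := by
      rw [hVW]
      have := hWmono ∅ (Finset.Icc 1 (t0 - 1)) (Finset.empty_subset _)
      simpa [hWdef] using this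
    have h2 : X t0 ⬝ᵥ (V (t0 - 1))⁻¹.mulVec (X t0)
        ≤ X t0 ⬝ᵥ ((lam • 1 : Matrix (Fin d) (Fin d) ℝ))⁻¹.mulVec (X t0) :=
      inv_quad_anti (smul_one_posdef hlam) hpsd0 (X t0)
    have hinv : ((lam • 1 : Matrix (Fin d) (Fin d) ℝ))⁻¹ = lam⁻¹ • 1 := by
      apply Matrix.inv_eq_right_inv
      rw [Matrix.smul_mul, Matrix.mul_smul, Matrix.one_mul, smul_smul,
        mul_inv_cancel₀ hlam.ne']
      simp
    rw [hinv] at h2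
    have h3 : X t0 ⬝ᵥ ((lam⁻¹ • 1 : Matrix (Fin d) (Fin d) ℝ)).mulVec (X t0)
        = (X t0 ⬝ᵥ X t0) / lam := by
      simp [Matrix.smul_mulVec, Matrix.one_mulVec, dotProduct_smul, smul_eq_mul]
      ring
    rw [h3] at h2
    have h4 : X t0 ⬝ᵥ X t0 ≤ L ^ 2 := hX t0 (hS ht0)
    have h5 : b ≤ L ^ 2 / lam := le_trans h1 (le_trans h2 (by gcongr))
    calc b * lam ≤ (L ^ 2 / lam) * lam := by nlinarith
      _ = L ^ 2 := by field_simp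
  -- final algebra
  have hlog1b : b / 2 ≤ Real.log (1 + b) := by
    have h := Real.log_le_sub_one_of_pos (show (0:ℝ) < (1 + b)⁻¹ by positivity)
    rw [Real.log_inv] at h
    have hinv1 : (1 + b) * (1 + b)⁻¹ = 1 := mul_inv_cancel₀ (by positivity)
    nlinarith [h, hinv1, hb.le, hb1]
  set s : ℝ := (S.card : ℝ) with hs
  have hs0 : 0 ≤ s := by positivity
  set c : ℝ := 2 * L ^ 2 / (b * lam) with hc
  have hc2 : 2 ≤ c := by
    rw [hc, le_div_iff₀ (by positivity)]
    nlinarith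
  have hA3 : Real.log 3 ≤ Real.log (1 + c) := Real.log_le_log (by norm_num) (by linarith)
  set A : ℝ := Real.log (1 + c) with hAdef
  have hA0 : 0 < A := lt_of_lt_of_le (Real.log_pos (by norm_num)) hA3
  have hkey : s * L ^ 2 / (d * lam) = (s * b / (2 * d)) * c := by
    rw [hc]; field_simp
  set r : ℝ := s * b / (2 * d) with hr
  have hr0 : 0 ≤ r := by positivity
  have hlogsplit : Real.log (1 + r * c) ≤ Real.log (1 + r) + A := by
    rw [hAdef, ← Real.log_mul (by positivity) (by positivity)]
    apply Real.log_le_log (by positivity)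
    nlinarith
  have hlogr : Real.log (1 + r) ≤ Real.log 3 + r / 3 := by
    have hle : (1:ℝ) + r ≤ 3 * (1 + r / 3) := by linarith
    calc Real.log (1 + r) ≤ Real.log (3 * (1 + r / 3)) :=
          Real.log_le_log (by positivity) hle
      _ = Real.log 3 + Real.log (1 + r / 3) := Real.log_mul (by norm_num) (by positivity)
      _ ≤ Real.log 3 + r / 3 := by
          have := Real.log_le_sub_one_of_pos (show (0:ℝ) < 1 + r / 3 by positivity)
          linarith
  have hchain : (d : ℝ) * r ≤ (d : ℝ) * (Real.log 3 + r / 3 + A) := by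
    have e1 : (d : ℝ) * r = s * (b / 2) := by rw [hr]; field_simp
    have e2 : s * (b / 2) ≤ s * Real.log (1 + b) :=
      mul_le_mul_of_nonneg_left hlog1b hs0
    have e3 := hmain
    rw [hkey] at e3
    have e4 : Real.log (1 + r * c) ≤ Real.log 3 + r / 3 + A := by linarith
    have e5 : (d : ℝ) * Real.log (1 + r * c) ≤ (d : ℝ) * (Real.log 3 + r / 3 + A) :=
      mul_le_mul_of_nonneg_left e4 (le_of_lt hdR)
    linarith
  have hr3A : r ≤ 3 * A := by
    have h6 : r ≤ Real.log 3 + r / 3 + A := le_of_mul_le_mul_left hchain hdR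
    nlinarith
  have hseq : s = 2 * d * r / b := by rw [hr]; field_simp
  rw [hs] at hseq ⊢
  rw [hseq]
  calc 2 * (d : ℝ) * r / b ≤ 2 * d * (3 * A) / b := by
        gcongr
    _ = 6 * d / b * A := by field_simp; ring



set_option maxHeartbeats 2000000

/-- **Deterministic peeling bound with a logarithmic factor.** With `V_0 = λ·I_d`,
`V_t = V_{t−1} + X_t X_tᵀ`, `‖X_t‖ ≤ L`, gaps `Δ_t ∈ [0,1]`, and a nondecreasing sequence
`β_0 ≤ … ≤ β_{T−1}` with `β_0 ≥ 1` (write `β := β_{T−1}`), for every `Γ ∈ (0,1)`: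
`Σ_{t=1}^T Δ_t·1{‖X_t‖²_{V_{t−1}⁻¹} ≥ Δ_t²/(β_{t−1}·log T)}
  ≤ T·Γ + (48dβ·log T/Γ)·log(1 + 8L²β·log T/(λΓ²))`. -/
theorem peeling_bound_log (d T : ℕ) (hd : 1 ≤ d) (hT : 3 ≤ T) (lam L : ℝ)
    (hlam : 0 < lam) (hL : 0 < L)
    (X : ℕ → Fin d → ℝ) (hX : ∀ t ∈ Finset.Icc 1 T, enorm2 (X t) ≤ L)
    (V : ℕ → Matrix (Fin d) (Fin d) ℝ)
    (hV0 : V 0 = lam • (1 : Matrix (Fin d) (Fin d) ℝ))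
    (hV : ∀ t, V (t + 1) = V t + Matrix.vecMulVec (X (t + 1)) (X (t + 1)))
    (Δ : ℕ → ℝ) (hΔ : ∀ t ∈ Finset.Icc 1 T, Δ t ∈ Set.Icc (0 : ℝ) 1)
    (β : ℕ → ℝ) (hβ0 : 1 ≤ β 0)
    (hβmono : ∀ s t : ℕ, s ≤ t → t ≤ T - 1 → β s ≤ β t)
    (Γ : ℝ) (hΓ0 : 0 < Γ) (hΓ1 : Γ < 1) :
    ∑ t ∈ Finset.Icc 1 T,
        Δ t * (if Δ t ^ 2 / (β (t - 1) * Real.log T) ≤ X t ⬝ᵥ (V (t - 1))⁻¹.mulVec (X t)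
          then (1 : ℝ) else 0)
      ≤ T * Γ + (48 * d * β (T - 1) * Real.log T / Γ) *
          Real.log (1 + 8 * L ^ 2 * β (T - 1) * Real.log T / (lam * Γ ^ 2)) := by
  -- basic facts
  have hlogT : 1 < Real.log T := by
    have h3T : (3:ℝ) ≤ T := by exact_mod_cast hT
    have h3 : Real.exp 1 < 3 := by
      have := Real.exp_one_lt_d9
      linarith
    calc (1:ℝ) = Real.log (Real.exp 1) := (Real.log_exp 1).symm
      _ < Real.log 3 := Real.log_lt_log (Real.exp_pos 1) h3
      _ ≤ Real.log T := Real.log_le_log (by norm_num) h3T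
  have hβT : 1 ≤ β (T - 1) := le_trans hβ0 (hβmono 0 (T - 1) (Nat.zero_le _) le_rfl)
  have hβt : ∀ t ∈ Finset.Icc 1 T, 1 ≤ β (t - 1) ∧ β (t - 1) ≤ β (T - 1) := by
    intro t ht
    have htT := (Finset.mem_Icc.mp ht).2
    have h1 : t - 1 ≤ T - 1 := by omega
    exact ⟨le_trans hβ0 (hβmono 0 (t - 1) (Nat.zero_le _) h1), hβmono (t - 1) (T - 1) h1 le_rfl⟩
  have hX' : ∀ t ∈ Finset.Icc 1 T, X t ⬝ᵥ X t ≤ L ^ 2 := by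
    intro t ht
    have h0 : 0 ≤ X t ⬝ᵥ X t := by
      simpa [star_trivial] using dotProduct_star_self_nonneg (X t)
    have h1 := hX t ht
    have h2 : (enorm2 (X t)) ^ 2 = X t ⬝ᵥ X t := Real.sq_sqrt h0
    rw [← h2]
    exact pow_le_pow_left₀ (Real.sqrt_nonneg _) h1 2
  set lgT := Real.log T with hlgT'
  set βT := β (T - 1) with hβT'
  set Astar := Real.log (1 + 8 * L ^ 2 * βT * lgT / (lam * Γ ^ 2)) with hAstar
  have hAstar0 : 0 ≤ Astar := Real.log_nonneg (by
    have : (0:ℝ) ≤ 8 * L ^ 2 * βT * lgT / (lam * Γ ^ 2) := by positivity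
    linarith)
  -- split the sum
  set F : ℕ → ℝ := fun t => Δ t * (if Δ t ^ 2 / (β (t - 1) * lgT) ≤ X t ⬝ᵥ (V (t - 1))⁻¹.mulVec (X t)
    then (1:ℝ) else 0) with hF
  have hsplit := Finset.sum_filter_add_sum_filter_not (Finset.Icc 1 T) (fun t => Δ t ≤ Γ) F
  -- small gaps part
  have hsmall : ∑ t ∈ (Finset.Icc 1 T).filter (fun t => Δ t ≤ Γ), F t ≤ T * Γ := by
    have hle : ∀ t ∈ (Finset.Icc 1 T).filter (fun t => Δ t ≤ Γ), F t ≤ Γ := by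
      intro t ht
      rw [Finset.mem_filter] at ht
      have hΔt := hΔ t ht.1
      have h1 : F t ≤ Δ t := by
        rw [hF]
        simp only
        split
        · simp
        · simp [hΔt.1]
      exact le_trans h1 ht.2
    calc ∑ t ∈ (Finset.Icc 1 T).filter (fun t => Δ t ≤ Γ), F t
        ≤ ((Finset.Icc 1 T).filter (fun t => Δ t ≤ Γ)).card • Γ :=
          Finset.sum_le_card_nsmul _ _ _ hle
      _ = (((Finset.Icc 1 T).filter (fun t => Δ t ≤ Γ)).card : ℝ) * Γ := by
          rw [nsmul_eq_mul]
      _ ≤ T * Γ := by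
          apply mul_le_mul_of_nonneg_right _ hΓ0.le
          have hcard : ((Finset.Icc 1 T).filter (fun t => Δ t ≤ Γ)).card ≤ T := by
            calc ((Finset.Icc 1 T).filter (fun t => Δ t ≤ Γ)).card
                ≤ (Finset.Icc 1 T).card := Finset.card_filter_le _ _
              _ = T := by rw [Nat.card_Icc]; omega
          exact_mod_cast hcard
  -- big gaps part
  set B : Finset ℕ := (Finset.Icc 1 T).filter
    (fun t => ¬(Δ t ≤ Γ) ∧ Δ t ^ 2 / (β (t - 1) * lgT) ≤ X t ⬝ᵥ (V (t - 1))⁻¹.mulVec (X t)) with hB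
  have hbig : ∑ t ∈ (Finset.Icc 1 T).filter (fun t => ¬(Δ t ≤ Γ)), F t = ∑ t ∈ B, Δ t := by
    rw [hB, ← Finset.filter_filter,
      Finset.sum_filter
        (fun t => Δ t ^ 2 / (β (t - 1) * lgT) ≤ X t ⬝ᵥ (V (t - 1))⁻¹.mulVec (X t))
        (fun t => Δ t)]
    apply Finset.sum_congr rfl
    intro t _
    rw [hF]
    simp only [mul_ite, mul_one, mul_zero]
  -- membership facts for B
  have hBmem : ∀ t ∈ B, t ∈ Finset.Icc 1 T ∧ Γ < Δ t ∧ Δ t ≤ 1 ∧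
      Δ t ^ 2 / (β (t - 1) * lgT) ≤ X t ⬝ᵥ (V (t - 1))⁻¹.mulVec (X t) := by
    intro t ht
    rw [hB, Finset.mem_filter] at ht
    exact ⟨ht.1, lt_of_not_ge ht.2.1, (hΔ t ht.1).2, ht.2.2⟩
  -- dyadic level
  have hex : ∃ n : ℕ, 1 / Γ < 2 ^ n := pow_unbounded_of_one_lt (1 / Γ) one_lt_two
  set Lnat := Nat.find hex with hLnat
  have hL1 : 1 / Γ < 2 ^ Lnat := Nat.find_spec hex
  have hLpos : 1 ≤ Lnat := by
    rcases Nat.eq_zero_or_pos Lnat with h | h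
    · exfalso
      have h1 : (1:ℝ) < 1 / Γ := (one_lt_div hΓ0).mpr hΓ1
      rw [h, pow_zero] at hL1
      linarith
    · exact h
  have hL2 : (2:ℝ) ^ (Lnat - 1) ≤ 1 / Γ := by
    have := Nat.find_min hex (show Lnat - 1 < Lnat by omega)
    push_neg at this
    exact this
  -- buckets
  set Bl : ℕ → Finset ℕ := fun l => B.filter (fun t => 1 / 2 ^ l < Δ t ∧ Δ t ≤ 2 / 2 ^ l)
    with hBl
  have hcover : B ⊆ (Finset.Icc 1 Lnat).biUnion Bl := by
    intro t ht
    obtain ⟨htIcc, hΓΔ, hΔ1, hind⟩ := hBmem t ht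
    have hwit : 1 / 2 ^ Lnat < Δ t := by
      have h2L : (0:ℝ) < 2 ^ Lnat := by positivity
      rw [div_lt_iff₀ h2L]
      rw [div_lt_iff₀ hΓ0] at hL1
      nlinarith
    have hexl : ∃ l : ℕ, 1 / 2 ^ l < Δ t := ⟨Lnat, hwit⟩
    have hspec : 1 / 2 ^ (Nat.find hexl) < Δ t := Nat.find_spec hexl
    have hl0le : Nat.find hexl ≤ Lnat := Nat.find_min' hexl hwit
    have hl01 : 1 ≤ Nat.find hexl := by
      rcases Nat.eq_zero_or_pos (Nat.find hexl) with h | h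
      · exfalso
        rw [h, pow_zero] at hspec
        norm_num at hspec
        linarith
      · exact h
    have hup : Δ t ≤ 2 / 2 ^ (Nat.find hexl) := by
      have hmin := Nat.find_min hexl (show Nat.find hexl - 1 < Nat.find hexl by omega)
      push_neg at hmin
      have h2 : (2:ℝ) ^ (Nat.find hexl) = 2 * 2 ^ (Nat.find hexl - 1) := by
        rw [← pow_succ']
        congr 1
        omega
      rw [h2]
      have hp : (0:ℝ) < 2 ^ (Nat.find hexl - 1) := by positivity
      calc Δ t ≤ 1 / 2 ^ (Nat.find hexl - 1) := hmin
        _ = 2 / (2 * 2 ^ (Nat.find hexl - 1)) := by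
            rw [← mul_div_mul_left (1:ℝ) _ two_ne_zero, mul_one]
    rw [Finset.mem_biUnion]
    refine ⟨Nat.find hexl, Finset.mem_Icc.mpr ⟨hl01, hl0le⟩, ?_⟩
    rw [hBl]
    exact Finset.mem_filter.mpr ⟨ht, hspec, hup⟩
  have hdisj : (↑(Finset.Icc 1 Lnat) : Set ℕ).PairwiseDisjoint Bl := by
    have key : ∀ a b : ℕ, a < b → ∀ u : ℝ, 1 / 2 ^ a < u → u ≤ 2 / 2 ^ b → False := by
      intro a b hab u h1 h2
      have hpow : (2:ℝ) ^ (a + 1) ≤ 2 ^ b := pow_le_pow_right₀ one_le_two (by omega)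
      have ha : (0:ℝ) < 2 ^ a := by positivity
      have hbp : (0:ℝ) < 2 ^ b := by positivity
      rw [div_lt_iff₀ ha] at h1
      rw [le_div_iff₀ hbp] at h2
      rw [pow_succ] at hpow
      nlinarith
    intro l _ l' _ hne
    apply Finset.disjoint_left.mpr
    intro t htl htl'
    rw [hBl, Finset.mem_filter] at htl htl'
    obtain ⟨-, h1, h2⟩ := htl
    obtain ⟨-, h3, h4⟩ := htl'
    rcases lt_or_gt_of_ne hne with h | h
    · exact key l l' h (Δ t) h1 h4
    · exact key l' l h (Δ t) h3 h2
  have hsumB : ∑ t ∈ B, Δ t ≤ ∑ l ∈ Finset.Icc 1 Lnat, ∑ t ∈ Bl l, Δ t := by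
    have h1 : ∑ t ∈ B, Δ t ≤ ∑ t ∈ (Finset.Icc 1 Lnat).biUnion Bl, Δ t := by
      apply Finset.sum_le_sum_of_subset_of_nonneg hcover
      intro t ht _
      rw [Finset.mem_biUnion] at ht
      obtain ⟨l, -, htl⟩ := ht
      rw [hBl] at htl
      exact (hΔ t (hBmem t (Finset.mem_filter.mp htl).1).1).1
    rwa [Finset.sum_biUnion hdisj] at h1
  -- per-bucket bound
  have hβlg : 1 ≤ βT * lgT := by nlinarith
  have hbucket : ∀ l ∈ Finset.Icc 1 Lnat,
      ∑ t ∈ Bl l, Δ t ≤ 12 * d * 2 ^ l * (βT * lgT) * Astar := by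
    intro l hl
    obtain ⟨hl1, hlL⟩ := Finset.mem_Icc.mp hl
    set b : ℝ := 1 / (4 ^ l * (βT * lgT)) with hbdef
    have h4lpos : (0:ℝ) < 4 ^ l := by positivity
    have h2lpos : (0:ℝ) < 2 ^ l := by positivity
    have hbden : (0:ℝ) < 4 ^ l * (βT * lgT) := by nlinarith
    have hb0 : 0 < b := by rw [hbdef]; exact div_pos one_pos hbden
    have hb1 : b ≤ 1 := by
      rw [hbdef, div_le_one hbden]
      have h4 : (1:ℝ) ≤ 4 ^ l := one_le_pow₀ (by norm_num)
      nlinarith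
    have h4eq : (4:ℝ) ^ l = 2 ^ l * 2 ^ l := by rw [← mul_pow]; norm_num
    have hwS : ∀ t ∈ Bl l, b ≤ X t ⬝ᵥ (V (t - 1))⁻¹.mulVec (X t) := by
      intro t htl
      rw [hBl, Finset.mem_filter] at htl
      obtain ⟨htB, hlo, hhi⟩ := htl
      obtain ⟨htIcc, hΓΔ, hΔ1, hind⟩ := hBmem t htB
      obtain ⟨hβ1t, hβtT⟩ := hβt t htIcc
      refine le_trans ?_ hind
      rw [hbdef]
      have hsq : 1 / 4 ^ l ≤ Δ t ^ 2 := by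
        have hlo' : (1:ℝ) / 2 ^ l ≤ Δ t := hlo.le
        have := pow_le_pow_left₀ (by positivity) hlo' 2
        calc (1:ℝ) / 4 ^ l = (1 / 2 ^ l) ^ 2 := by rw [h4eq]; ring
          _ ≤ Δ t ^ 2 := this
      have hden : 0 < β (t - 1) * lgT := by nlinarith
      have hdenle : β (t - 1) * lgT ≤ βT * lgT := by nlinarith
      calc 1 / (4 ^ l * (βT * lgT)) = (1 / 4 ^ l) / (βT * lgT) := by ring
        _ ≤ Δ t ^ 2 / (β (t - 1) * lgT) := div_le_div₀ (sq_nonneg _) hsq hden hdenle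
    have hsub : Bl l ⊆ Finset.Icc 1 T := by
      intro t ht
      rw [hBl] at ht
      exact (hBmem t (Finset.mem_filter.mp ht).1).1
    have hcard := count_lemma d T hd lam L b hlam hL hb0 hb1 X hX' V hV0 hV (Bl l) hsub hwS
    have hlog : Real.log (1 + 2 * L ^ 2 / (b * lam)) ≤ Astar := by
      rw [hAstar]
      apply Real.log_le_log (by positivity)
      have h4l : (4:ℝ) ^ l * Γ ^ 2 ≤ 4 := by
        have h2l : (2:ℝ) ^ l ≤ 2 / Γ := by
          have ha : (2:ℝ) ^ l ≤ 2 ^ Lnat := pow_le_pow_right₀ one_le_two hlL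
          have hbb : (2:ℝ) ^ Lnat = 2 * 2 ^ (Lnat - 1) := by
            rw [← pow_succ']; congr 1; omega
          rw [hbb] at ha
          calc (2:ℝ) ^ l ≤ 2 * 2 ^ (Lnat - 1) := ha
            _ ≤ 2 * (1 / Γ) := by linarith
            _ = 2 / Γ := by ring
        rw [h4eq]
        have := mul_le_mul h2l h2l h2lpos.le (by positivity)
        calc (2:ℝ) ^ l * 2 ^ l * Γ ^ 2 ≤ (2 / Γ) * (2 / Γ) * Γ ^ 2 := by nlinarith
          _ = 4 := by field_simp; ring
      have harg : 2 * L ^ 2 / (b * lam) ≤ 8 * L ^ 2 * βT * lgT / (lam * Γ ^ 2) := by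
        rw [hbdef]
        have hne1 : (4:ℝ) ^ l ≠ 0 := ne_of_gt h4lpos
        have hne2 : βT * lgT ≠ 0 := by nlinarith
        have he : 2 * L ^ 2 / ((1 / (4 ^ l * (βT * lgT))) * lam)
            = 2 * L ^ 2 * 4 ^ l * (βT * lgT) / lam := by
          field_simp
        rw [he, div_le_div_iff₀ hlam (mul_pos hlam (by positivity))]
        have hfac : (0:ℝ) ≤ 2 * L ^ 2 * (βT * lgT) * lam :=
          mul_nonneg (mul_nonneg (by positivity) (by linarith)) hlam.le
        have hmul := mul_le_mul_of_nonneg_left h4l hfac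
        nlinarith [hmul]
      linarith
    have hcard2 : ((Bl l).card : ℝ) ≤ 6 * d * 4 ^ l * (βT * lgT) * Astar := by
      calc ((Bl l).card : ℝ) ≤ 6 * d / b * Real.log (1 + 2 * L ^ 2 / (b * lam)) := hcard
        _ ≤ 6 * d / b * Astar := by
            apply mul_le_mul_of_nonneg_left hlog
            positivity
        _ = 6 * d * 4 ^ l * (βT * lgT) * Astar := by
            rw [hbdef]
            field_simp
    have hsum : ∑ t ∈ Bl l, Δ t ≤ ((Bl l).card : ℝ) * (2 / 2 ^ l) := by
      have hle : ∀ t ∈ Bl l, Δ t ≤ 2 / 2 ^ l := by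
        intro t ht
        rw [hBl, Finset.mem_filter] at ht
        exact ht.2.2
      calc ∑ t ∈ Bl l, Δ t ≤ (Bl l).card • (2 / 2 ^ l : ℝ) :=
            Finset.sum_le_card_nsmul _ _ _ hle
        _ = ((Bl l).card : ℝ) * (2 / 2 ^ l) := by rw [nsmul_eq_mul]
    calc ∑ t ∈ Bl l, Δ t ≤ ((Bl l).card : ℝ) * (2 / 2 ^ l) := hsum
      _ ≤ (6 * d * 4 ^ l * (βT * lgT) * Astar) * (2 / 2 ^ l) := by
          apply mul_le_mul_of_nonneg_right hcard2
          positivity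
      _ = 12 * d * 2 ^ l * (βT * lgT) * Astar := by
          rw [h4eq]
          field_simp
          ring
  -- geometric sum
  have hgeom : ∑ l ∈ Finset.Icc 1 Lnat, (2:ℝ) ^ l ≤ 2 ^ (Lnat + 1) := by
    have h1 : ∑ l ∈ Finset.Icc 1 Lnat, (2:ℝ) ^ l ≤ ∑ l ∈ Finset.range (Lnat + 1), (2:ℝ) ^ l := by
      apply Finset.sum_le_sum_of_subset_of_nonneg
      · intro x hx
        rw [Finset.mem_range]
        rw [Finset.mem_Icc] at hx
        omega
      · intro i _ _
        positivity
    have h2 : ∑ l ∈ Finset.range (Lnat + 1), (2:ℝ) ^ l = 2 ^ (Lnat + 1) - 1 := by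
      rw [geom_sum_eq (by norm_num : (2:ℝ) ≠ 1)]
      norm_num
    linarith
  have hβlgA : 0 ≤ 12 * (d:ℝ) * (βT * lgT) * Astar :=
    mul_nonneg (mul_nonneg (by positivity) (by linarith)) hAstar0
  have htotal : ∑ t ∈ B, Δ t ≤ 48 * d * βT * lgT / Γ * Astar := by
    have h2L1 : (2:ℝ) ^ (Lnat + 1) ≤ 4 / Γ := by
      have h2 : (2:ℝ) ^ (Lnat + 1) = 2 * (2 * 2 ^ (Lnat - 1)) := by
        rw [← pow_succ', ← pow_succ']
        congr 1
        omega
      rw [h2]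
      rw [le_div_iff₀ hΓ0]
      nlinarith [(le_div_iff₀ hΓ0).mp hL2]
    calc ∑ t ∈ B, Δ t ≤ ∑ l ∈ Finset.Icc 1 Lnat, ∑ t ∈ Bl l, Δ t := hsumB
      _ ≤ ∑ l ∈ Finset.Icc 1 Lnat, 12 * d * 2 ^ l * (βT * lgT) * Astar :=
          Finset.sum_le_sum hbucket
      _ = 12 * d * (βT * lgT) * Astar * ∑ l ∈ Finset.Icc 1 Lnat, (2:ℝ) ^ l := by
          rw [Finset.mul_sum]
          apply Finset.sum_congr rfl
          intro l _
          ring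
      _ ≤ 12 * d * (βT * lgT) * Astar * 2 ^ (Lnat + 1) :=
          mul_le_mul_of_nonneg_left hgeom hβlgA
      _ ≤ 12 * d * (βT * lgT) * Astar * (4 / Γ) :=
          mul_le_mul_of_nonneg_left h2L1 hβlgA
      _ = 48 * d * βT * lgT / Γ * Astar := by
          field_simp
          ring
  rw [← hsplit]
  have hbig2 : ∑ t ∈ (Finset.Icc 1 T).filter (fun t => ¬(Δ t ≤ Γ)), F t
      ≤ 48 * d * βT * lgT / Γ * Astar := by rw [hbig]; exact htotal
  linarith
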